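/- For all n ≥ 2 and k ≥ 0, the number g(n,k) of partial Łukasiewicz paths of length n ending at height k whose last step is a down-step satisfies (n+k+1) · g(n,k) = (k+3) · C(2n+k−2, n−2). -/

import Mathlib

/-- A partial Łukasiewicz path of length `n` ending at height `k`:
a list of `n` integer steps, each `≥ -1`, with all partial sums `≥ 0`
and total sum `k`. -/
def IsPartialLuk (w : List ℤ) (n k : ℕ) : Prop :=
  w.length = n ∧ (∀ x ∈ w, -1 ≤ x) ∧ (∀ i, 0 ≤ (w.take i).sum) ∧ w.sum = k

/-- The last step of the path is a down-step, i.e. `w_n = -1`. -/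
def LastStepDown (w : List ℤ) : Prop := w.getLast? = some (-1)

open List Finset

lemma sum_ge_neg_length (l : List ℤ) (h : ∀ x ∈ l, -1 ≤ x) : -(l.length : ℤ) ≤ l.sum := by
  induction l with
  | nil => simp
  | cons a t ih =>
    have h1 := ih (fun x hx => h x (List.mem_cons_of_mem a hx))
    have h2 := h a List.mem_cons_self
    simp only [List.sum_cons, List.length_cons]
    push_cast
    linarith

lemma luk_mem_bound {w : List ℤ} {n k : ℕ} (h : IsPartialLuk w n k) :
    ∀ x ∈ w, x ∈ Set.Icc (-1 : ℤ) ((k : ℤ) + n) := by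
  obtain ⟨hlen, hge, _, hsum⟩ := h
  intro x hx
  refine ⟨hge x hx, ?_⟩
  have hperm : w ~ x :: w.erase x := List.perm_cons_erase hx
  have hs : w.sum = x + (w.erase x).sum := by
    rw [hperm.sum_eq, List.sum_cons]
  have hlb : -(((w.erase x).length : ℤ)) ≤ (w.erase x).sum :=
    sum_ge_neg_length _ (fun y hy => hge y (List.mem_of_mem_erase hy))
  have hle : (w.erase x).length ≤ n := by
    rw [← hlen]; exact (List.length_erase_le)
  have : ((w.erase x).length : ℤ) ≤ n := by exact_mod_cast hle
  linarith [hsum ▸ hs]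

instance luk_finite (n k : ℕ) : Finite {w : List ℤ // IsPartialLuk w n k} := by
  have hfin : (Set.Icc (-1 : ℤ) ((k : ℤ) + n)).Finite := Set.finite_Icc _ _
  haveI := hfin.to_subtype
  apply Finite.of_injective
    (f := fun w : {w : List ℤ // IsPartialLuk w n k} =>
      fun i : Fin n =>
        (⟨w.val.get (Fin.cast w.2.1.symm i),
          luk_mem_bound w.2 _ (List.get_mem _ _)⟩ : Set.Icc (-1 : ℤ) ((k : ℤ) + n)))
  intro w1 w2 hw
  apply Subtype.ext
  apply List.ext_get (by rw [w1.2.1, w2.2.1])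
  intro i h1 h2
  have := congrFun hw ⟨i, by rw [← w1.2.1]; exact h1⟩
  simpa using congrArg Subtype.val this

noncomputable def L (m j : ℕ) : ℕ := Nat.card {w : List ℤ // IsPartialLuk w m j}

lemma dropLast_prefix_sum {w : List ℤ} (h : ∀ i, 0 ≤ (w.take i).sum) :
    ∀ i, 0 ≤ (w.dropLast.take i).sum := by
  intro i
  rw [List.dropLast_eq_take, List.take_take]
  exact h _

lemma dropLast_sum_nonneg {w : List ℤ} {m j : ℕ} (h : IsPartialLuk w (m+1) j) :
    0 ≤ w.dropLast.sum := by
  have := h.2.2.1 m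
  rw [List.dropLast_eq_take, h.1]
  simpa using this

lemma luk_ne_nil {w : List ℤ} {m j : ℕ} (h : IsPartialLuk w (m+1) j) : w ≠ [] := by
  intro hw; rw [hw] at h; simp [IsPartialLuk] at h

lemma luk_decomp {w : List ℤ} {m j : ℕ} (h : IsPartialLuk w (m+1) j) :
    w.dropLast ++ [w.getLast (luk_ne_nil h)] = w :=
  List.dropLast_append_getLast _

lemma luk_sum_decomp {w : List ℤ} {m j : ℕ} (h : IsPartialLuk w (m+1) j) :
    w.dropLast.sum + w.getLast (luk_ne_nil h) = (j : ℤ) := by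
  conv_rhs => rw [← h.2.2.2, ← luk_decomp h]
  simp

lemma luk_getLast_ge {w : List ℤ} {m j : ℕ} (h : IsPartialLuk w (m+1) j) :
    -1 ≤ w.getLast (luk_ne_nil h) :=
  h.2.1 _ (List.getLast_mem _)

lemma dropLast_luk {w : List ℤ} {m j : ℕ} (h : IsPartialLuk w (m+1) j) :
    IsPartialLuk w.dropLast m (w.dropLast.sum.toNat) := by
  refine ⟨?_, ?_, dropLast_prefix_sum h.2.2.1, ?_⟩
  · rw [List.length_dropLast, h.1]; omega
  · exact fun x hx => h.2.1 x ((List.dropLast_sublist w).mem hx)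
  · rw [Int.toNat_of_nonneg (dropLast_sum_nonneg h)]

lemma concat_luk {w : List ℤ} {m j' j : ℕ} (h : IsPartialLuk w m j') {a : ℤ}
    (ha : -1 ≤ a) (hj : (j : ℤ) = (j' : ℤ) + a) : IsPartialLuk (w ++ [a]) (m+1) j := by
  refine ⟨?_, ?_, ?_, ?_⟩
  · simp [h.1]
  · intro x hx
    rcases List.mem_append.1 hx with hx | hx
    · exact h.2.1 x hx
    · simp at hx; omega
  · intro i
    rcases le_or_gt i w.length with hi | hi
    · rw [List.take_append_of_le_length hi]; exact h.2.2.1 i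
    · rw [List.take_of_length_le (by simp; omega)]
      rw [List.sum_append, h.2.2.2]
      simp
      omega
  · rw [List.sum_append, h.2.2.2]; simp [hj]

lemma L_one (j : ℕ) : L 1 j = 1 := by
  have hu : ∀ w : {w : List ℤ // IsPartialLuk w 1 j}, w = ⟨[(j : ℤ)], by
      refine ⟨rfl, ?_, ?_, by simp⟩
      · intro x hx; simp at hx; omega
      · intro i
        match i with
        | 0 => simp
        | i+1 => simp⟩ := by
    rintro ⟨w, hw⟩
    apply Subtype.ext
    obtain ⟨a, rfl⟩ := List.length_eq_one_iff.1 hw.1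
    have := hw.2.2.2
    simp at this ⊢
    omega
  have : Unique {w : List ℤ // IsPartialLuk w 1 j} :=
    { default := _, uniq := hu }
  exact Nat.card_unique

lemma L_rec (m j : ℕ) : L (m+1) j = ∑ j' ∈ Finset.range (j+2), L m j' := by
  have e : {w : List ℤ // IsPartialLuk w (m+1) j} ≃
      {p : Fin (j+2) × List ℤ // IsPartialLuk p.2 m (p.1 : ℕ)} := by
    refine ⟨fun w => ⟨(⟨w.val.dropLast.sum.toNat, ?_⟩, w.val.dropLast), dropLast_luk w.2⟩,
      fun p => ⟨p.val.2 ++ [(j : ℤ) - ((p.val.1 : ℕ) : ℤ)], ?_⟩, ?_, ?_⟩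
    · have h1 := luk_sum_decomp w.2
      have h2 := luk_getLast_ge w.2
      have h3 := dropLast_sum_nonneg w.2
      omega
    · refine concat_luk p.2 ?_ ?_
      · have := p.val.1.2; omega
      · have := p.2.2.2.2
        omega
    · rintro ⟨w, hw⟩
      apply Subtype.ext
      have h1 := luk_sum_decomp hw
      have h3 := dropLast_sum_nonneg hw
      have : (j : ℤ) - (w.dropLast.sum.toNat : ℤ) = w.getLast (luk_ne_nil hw) := by omega
      simp only [this]
      exact luk_decomp hw
    · rintro ⟨⟨j₀, w'⟩, hp⟩
      apply Subtype.ext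
      apply Prod.ext
      · apply Fin.ext
        simp only [List.dropLast_concat]
        have := hp.2.2.2
        simp only [this]
        simp
      · simp only [List.dropLast_concat]
  rw [L, Nat.card_congr (e.trans (Equiv.subtypeProdEquivSigmaSubtype
      (fun (a : Fin (j+2)) (b : List ℤ) => IsPartialLuk b m (a : ℕ))))]
  haveI : ∀ a : Fin (j+2), Fintype {b : List ℤ // IsPartialLuk b m (a : ℕ)} :=
    fun a => Fintype.ofFinite _
  rw [Nat.card_eq_fintype_card, Fintype.card_sigma]
  rw [← Fin.sum_univ_eq_sum_range (fun j' => L m j')]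
  congr 1
  ext a
  rw [L, Nat.card_eq_fintype_card]

lemma card_lastDown (m k : ℕ) :
    Nat.card {w : List ℤ // IsPartialLuk w (m+2) k ∧ LastStepDown w} = L (m+1) (k+1) := by
  apply Nat.card_congr
  refine ⟨fun w => ⟨w.val.dropLast, ?_⟩, fun w' => ⟨w'.val ++ [-1], ?_, ?_⟩, ?_, ?_⟩
  · have h : IsPartialLuk w.val ((m+1)+1) k := w.2.1
    have hd := dropLast_luk h
    have hlast : w.val.getLast (luk_ne_nil h) = -1 := by
      have h2 := w.2.2
      rw [LastStepDown, List.getLast?_eq_getLast (luk_ne_nil h)] at h2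
      exact Option.some.inj h2
    have hs := luk_sum_decomp h
    have hnn := dropLast_sum_nonneg h
    have ht : w.val.dropLast.sum.toNat = k + 1 := by omega
    rwa [ht] at hd
  · exact concat_luk w'.2 (by norm_num) (by push_cast; ring)
  · rw [LastStepDown, List.getLast?_concat]
  · rintro ⟨w, hw⟩
    apply Subtype.ext
    have h : IsPartialLuk w ((m+1)+1) k := hw.1
    have hlast : w.getLast (luk_ne_nil h) = -1 := by
      have h2 := hw.2
      rw [LastStepDown, List.getLast?_eq_getLast (luk_ne_nil h)] at h2
      exact Option.some.inj h2
    show w.dropLast ++ [-1] = w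
    rw [← hlast]
    exact luk_decomp h
  · rintro ⟨w', hw'⟩
    apply Subtype.ext
    simp [List.dropLast_concat]

lemma L_closed : ∀ a j, L (a+2) j + Nat.choose (2*a+j+3) a = Nat.choose (2*a+j+3) (a+1) := by
  intro a
  induction a with
  | zero =>
    intro j
    rw [show (1:ℕ)+1 = 1+1 from rfl, L_rec 1 j]
    simp only [L_one, Finset.sum_const, Finset.card_range, smul_eq_mul, mul_one]
    simp [Nat.choose_one_right]
  | succ a IH =>
    have claim : ∀ j, (∑ j' ∈ Finset.range (j+2), L (a+2) j')
        + Nat.choose (2*a+j+5) (a+1) = Nat.choose (2*a+j+5) (a+2) := by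
      intro j
      induction j with
      | zero =>
        rw [Finset.sum_range_succ, Finset.sum_range_succ, Finset.sum_range_zero]
        have i0 := IH 0
        have i1 := IH 1
        rw [show 2*a+0+3 = 2*a+3 by omega] at i0
        rw [show 2*a+1+3 = 2*a+4 by omega] at i1
        have p1 : Nat.choose (2*a+0+5) (a+2) = Nat.choose (2*a+4) (a+1) + Nat.choose (2*a+4) (a+2) := by
          rw [show 2*a+0+5 = (2*a+4)+1 by omega, show a+2 = (a+1)+1 from rfl]
          exact Nat.choose_succ_succ _ _
        have p2 : Nat.choose (2*a+0+5) (a+1) = Nat.choose (2*a+4) a + Nat.choose (2*a+4) (a+1) := by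
          rw [show 2*a+0+5 = (2*a+4)+1 by omega, show a+1 = a+1 from rfl]
          exact Nat.choose_succ_succ _ _
        have p3 : Nat.choose (2*a+4) (a+1) = Nat.choose (2*a+3) a + Nat.choose (2*a+3) (a+1) := by
          rw [show 2*a+4 = (2*a+3)+1 by omega]
          exact Nat.choose_succ_succ _ _
        have p4 : Nat.choose (2*a+4) (a+2) = Nat.choose (2*a+3) (a+1) + Nat.choose (2*a+3) (a+2) := by
          rw [show 2*a+4 = (2*a+3)+1 by omega, show a+2 = (a+1)+1 from rfl]
          exact Nat.choose_succ_succ _ _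
        have p5 : Nat.choose (2*a+3) (a+1) = Nat.choose (2*a+3) (a+2) := by
          rw [show a+1 = (2*a+3)-(a+2) by omega]
          exact Nat.choose_symm (by omega)
        omega
      | succ j IHj =>
        rw [Finset.sum_range_succ]
        have i2 := IH (j+2)
        rw [show 2*a+(j+2)+3 = 2*a+j+5 by omega] at i2
        have p1 : Nat.choose (2*a+(j+1)+5) (a+2) = Nat.choose (2*a+j+5) (a+1) + Nat.choose (2*a+j+5) (a+2) := by
          rw [show 2*a+(j+1)+5 = (2*a+j+5)+1 by omega, show a+2 = (a+1)+1 from rfl]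
          exact Nat.choose_succ_succ _ _
        have p2 : Nat.choose (2*a+(j+1)+5) (a+1) = Nat.choose (2*a+j+5) a + Nat.choose (2*a+j+5) (a+1) := by
          rw [show 2*a+(j+1)+5 = (2*a+j+5)+1 by omega]
          exact Nat.choose_succ_succ _ _
        omega
    intro j
    have := claim j
    rw [← L_rec (a+2) j] at this
    rw [show 2*(a+1)+j+3 = 2*a+j+5 by omega]
    exact this

lemma main' (m k : ℕ) :
    (m + k + 3) * Nat.card {w : List ℤ // IsPartialLuk w (m+2) k ∧ LastStepDown w} =
      (k + 3) * Nat.choose (2*m+k+2) m := by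
  rw [card_lastDown]
  match m with
  | 0 =>
    rw [L_one]
    simp [Nat.mul_comm]
  | a+1 =>
    have hc := L_closed a (k+1)
    rw [show 2*a+(k+1)+3 = 2*a+k+4 by omega] at hc
    rw [show 2*(a+1)+k+2 = 2*a+k+4 by omega]
    set X := Nat.choose (2*a+k+4) a with hX
    set Y := Nat.choose (2*a+k+4) (a+1) with hY
    set Z := L (a+1+1) (k+1) with hZ
    have hZ' : Z = L (a+2) (k+1) := rfl
    rw [hZ'] at hZ
    -- hc : L (a+2) (k+1) + X = Y
    have e2 : (a+k+4) * X = (a+1) * Y := by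
      have h := Nat.choose_succ_right_eq (2*a+k+4) a
      rw [show 2*a+k+4 - a = a+k+4 by omega] at h
      calc (a+k+4) * X = X * (a+k+4) := Nat.mul_comm _ _
        _ = Y * (a+1) := h.symm
        _ = (a+1) * Y := Nat.mul_comm _ _
    have hc' : L (a+2) (k+1) = Z := hZ'.symm
    have e1 : (a+k+4) * Z + (a+k+4) * X = (a+k+4) * Y := by
      rw [← Nat.mul_add, ← hc', hc]
    have e3 : (a+k+4) * Y = (k+3) * Y + (a+1) * Y := by
      rw [← Nat.add_mul]
      congr 1
      omega
    have e4 : (a+k+4) * Z = (k+3) * Y := by omega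
    rw [show a+1+k+3 = a+k+4 by omega]
    exact e4

theorem partialLuk_lastDown_count (n k : ℕ) (hn : 2 ≤ n) :
    (n + k + 1) * Nat.card {w : List ℤ // IsPartialLuk w n k ∧ LastStepDown w} =
      (k + 3) * Nat.choose (2 * n + k - 2) (n - 2) := by
  obtain ⟨m, rfl⟩ : ∃ m, n = m + 2 := ⟨n - 2, by omega⟩
  rw [show m+2+k+1 = m+k+3 by omega, show 2*(m+2)+k-2 = 2*m+k+2 by omega,
    show m+2-2 = m by omega]
  exact main' m k
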